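/- Let (N,g) be Riemannian, T ⊂ N a compact submanifold, and γ_q the constant Hamiltonian chord at (q,0) ∈ ν*T for q ∈ T. Then the kernel of the Hessian of the action functional A_{H_g} at γ_q, acting on vector fields ξ = (ξ^∥, ξ^⊥) along γ_q with boundary conditions ξ^∥(i) ∈ T_qT and ξ^⊥(i) ∈ ν*_qT (i = 0,1), and defined by the linearized system Dξ^∥♭/dt = ξ^⊥, Dξ^⊥/dt = 0, consists exactly of the constant fields ξ(t) ≡ (v, 0) with v ∈ T_qT; in particular it is isomorphic to T_qT. -/

import Mathlib

noncomputable section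

/-- Kernel of the Hessian of the action functional at a constant chord `γ_q`, `q ∈ T`.

Identify `T_{(q,0)}(T*N) ≅ T_qN ⊕ T*_qN ≅ E ⊕ E` via the metric, with `W = T_qT` and
`Wᗮ` the conormal directions.  A vector field `ξ = (ξ^∥, ξ^⊥)` along `γ_q` lies in the
kernel iff it solves the linearized system `dξ^∥/dt = ξ^⊥`, `dξ^⊥/dt = 0` with boundary
conditions `ξ^∥(0), ξ^∥(1) ∈ W` and `ξ^⊥(0), ξ^⊥(1) ∈ Wᗮ`; and this holds exactly when
`ξ^∥ ≡ v` for some `v ∈ W` and `ξ^⊥ ≡ 0`.  In particular the kernel is isomorphic to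
`T_qT`. -/
theorem hessian_kernel_of_constant_chord
    {E : Type*} [NormedAddCommGroup E] [InnerProductSpace ℝ E]
    (W : Submodule ℝ E) (ξpar ξperp : ℝ → E) :
    ((∀ t, HasDerivAt ξpar (ξperp t) t) ∧ (∀ t, HasDerivAt ξperp (0 : E) t) ∧
        ξpar 0 ∈ W ∧ ξpar 1 ∈ W ∧ ξperp 0 ∈ Wᗮ ∧ ξperp 1 ∈ Wᗮ)
      ↔ ∃ v ∈ W, (∀ t, ξpar t = v) ∧ ∀ t, ξperp t = 0 := by
  constructor
  · rintro ⟨hpar, hperp, h0, h1, hp0, hp1⟩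
    -- ξperp is constant
    have hconst : ∀ t, ξperp t = ξperp 0 := by
      intro t
      have := is_const_of_deriv_eq_zero (f := ξperp)
        (fun x => (hperp x).differentiableAt) (fun x => (hperp x).deriv) t 0
      exact this
    set α := ξperp 0 with hα
    -- ξpar has constant derivative α, so ξpar t = ξpar 0 + t • α
    have hlin : ∀ t : ℝ, ξpar t = ξpar 0 + t • α := by
      intro t
      have key : ∀ s : ℝ, HasDerivAt (fun u : ℝ => ξpar u - u • α) 0 s := by
        intro s
        have h1' : HasDerivAt (fun u : ℝ => u • α) α s := by
          simpa using (hasDerivAt_id s).smul_const α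
        have := (hpar s).sub h1'
        simpa [hconst s, Pi.sub_def] using this
      have := is_const_of_deriv_eq_zero (f := fun u : ℝ => ξpar u - u • α)
        (fun x => (key x).differentiableAt) (fun x => (key x).deriv) t 0
      simp only [zero_smul, sub_zero] at this
      have : ξpar t - t • α = ξpar 0 := this
      linear_combination (norm := abel) this
    -- α ∈ W ∩ Wᗮ, hence α = 0
    have hαW : α ∈ W := by
      have : ξpar 1 - ξpar 0 ∈ W := W.sub_mem h1 h0
      simpa [hlin 1] using this
    have hαzero : α = 0 := by
      have : α ∈ W ⊓ Wᗮ := ⟨hαW, hp0⟩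
      simpa [Submodule.inf_orthogonal_eq_bot W] using this
    refine ⟨ξpar 0, h0, fun t => ?_, fun t => ?_⟩
    · simp [hlin t, hαzero]
    · simp [hconst t, ← hα, hαzero]
  · rintro ⟨v, hv, hp, hz⟩
    have hc : ξpar = fun _ => v := funext hp
    have hcz : ξperp = fun _ => (0 : E) := funext hz
    refine ⟨fun t => ?_, fun t => ?_, ?_, ?_, ?_, ?_⟩
    · rw [hc, hz t]; exact hasDerivAt_const t v
    · rw [hcz]; exact hasDerivAt_const t 0
    · simpa [hp 0] using hv
    · simpa [hp 1] using hv
    · simp [hz 0]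
    · simp [hz 1]
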